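/- arXiv:1210.4545 — 2 statements merged into one kernel-verified Lean document; each statement's English description precedes it below -/
import Mathlib

section
/- Let 0 < β < 1 and define w_β(t) = cos((1−β)t/2) / (sin(t/2))^{1−β} for t ∈ (0, π]. There exists a constant c(β) > 0 such that for all integers n ≥ 3, all integers i with 1 ≤ i ≤ (n−1)/2, and all t ∈ [0, π/n], |w_β(t + 2iπ/n) − w_β(t + (2i+1)π/n)| ≤ c(β) · n^{1−β} / i^{2−β}. -/
open Filter

noncomputable section

/-- `w_β(t) = cos((1-β)t/2) / (sin(t/2))^{1-β}`. -/
def wCoef (β t : ℝ) : ℝ := Real.cos ((1 - β) * t / 2) / (Real.sin (t / 2)) ^ (1 - β)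

set_option maxHeartbeats 1000000 in
/-- **Inequality (11) of Goginava–Sahakian.**
For `0 < β < 1` there is `c(β) > 0` such that for all `n ≥ 3`, all `1 ≤ i ≤ (n-1)/2` and
all `t ∈ [0, π/n]`,
`|w_β(t + 2iπ/n) - w_β(t + (2i+1)π/n)| ≤ c(β) n^{1-β} / i^{2-β}`. -/
theorem wCoef_difference_estimate (β : ℝ) (hβ0 : 0 < β) (hβ1 : β < 1) :
    ∃ c : ℝ, 0 < c ∧ ∀ n : ℕ, 3 ≤ n → ∀ i : ℕ, 1 ≤ i → 2 * i ≤ n - 1 →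
      ∀ t : ℝ, 0 ≤ t → t ≤ Real.pi / n →
        |wCoef β (t + 2 * i * Real.pi / n) - wCoef β (t + (2 * i + 1) * Real.pi / n)| ≤
          c * (n : ℝ) ^ (1 - β) / (i : ℝ) ^ (2 - β) := by
  refine ⟨Real.pi, Real.pi_pos, ?_⟩
  intro n hn3 i hi1 hile t ht0 htn
  have hπ : (0:ℝ) < Real.pi := Real.pi_pos
  have hn0 : (0:ℝ) < n := by exact_mod_cast (by omega : 0 < n)
  have hi0 : (0:ℝ) < i := by exact_mod_cast hi1
  have hin : 2 * (i:ℝ) + 1 ≤ n := by exact_mod_cast (by omega : 2 * i + 1 ≤ n)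
  have hn3' : (3:ℝ) ≤ n := by exact_mod_cast hn3
  set s : ℝ := i / n with hs
  have hs0 : 0 < s := by positivity
  have hs_half : s ≤ 1/2 := by rw [hs, div_le_iff₀ hn0]; linarith
  set a : ℝ := t + 2 * i * Real.pi / n with ha
  set b : ℝ := t + (2 * i + 1) * Real.pi / n with hb
  have hba : b - a = Real.pi / n := by rw [ha, hb]; field_simp; ring
  have hab : a ≤ b := by
    rw [← sub_nonneg, hba]; positivity
  have hπn3 : Real.pi / n ≤ Real.pi / 3 :=
    div_le_div_of_nonneg_left hπ.le (by norm_num) hn3'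
  have ha_lb : 2 * (i:ℝ) * Real.pi / n ≤ a := by rw [ha]; linarith
  have hb_ub : b ≤ Real.pi + Real.pi / n := by
    rw [hb]
    have h1 : (2 * (i:ℝ) + 1) * Real.pi / n ≤ Real.pi := by
      rw [div_le_iff₀ hn0]
      nlinarith
    linarith
  -- uniform lower bound for sin(x/2) on [a,b]
  have hsin : ∀ x ∈ Set.Icc a b, s ≤ Real.sin (x/2) := by
    intro x hx
    have hx1 : 2 * (i:ℝ) * Real.pi / n ≤ x := le_trans ha_lb hx.1
    have hxpos : 0 < x := lt_of_lt_of_le (by positivity) hx1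
    have hx2 : x ≤ Real.pi + Real.pi / n := le_trans hx.2 hb_ub
    rcases le_or_gt x Real.pi with hxπ | hxπ
    · have h := Real.mul_le_sin (x := x/2) (by positivity) (by linarith)
      have h' : x / Real.pi ≤ Real.sin (x/2) := by
        calc x / Real.pi = 2 / Real.pi * (x/2) := by field_simp
          _ ≤ _ := h
      have h2 : 2 * (i:ℝ) * Real.pi ≤ x * n := by
        have := (div_le_iff₀ hn0).mp hx1
        linarith
      have h3 : s ≤ x / Real.pi := by
        rw [hs, div_le_div_iff₀ hn0 hπ]
        nlinarith
      linarith
    · have h1 : 0 ≤ Real.pi - x/2 := by linarith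
      have h2 : Real.pi - x/2 ≤ Real.pi/2 := by linarith
      have h := Real.mul_le_sin (x := Real.pi - x/2) h1 h2
      have heq : Real.sin (x/2) = Real.sin (Real.pi - x/2) := (Real.sin_pi_sub _).symm
      have h3 : Real.pi/3 ≤ Real.pi - x/2 := by linarith
      have h4 : (2:ℝ)/3 ≤ 2 / Real.pi * (Real.pi - x/2) := by
        calc (2:ℝ)/3 = 2 / Real.pi * (Real.pi/3) := by field_simp
          _ ≤ _ := by
            apply mul_le_mul_of_nonneg_left h3 (by positivity)
      rw [heq]
      linarith
  have hsinpos : ∀ x ∈ Set.Icc a b, 0 < Real.sin (x/2) :=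
    fun x hx => lt_of_lt_of_le hs0 (hsin x hx)
  -- the function and its derivative
  set g : ℝ → ℝ := fun x => Real.cos ((1 - β) * x / 2) * Real.sin (x/2) ^ (β - 1) with hg
  set g' : ℝ → ℝ := fun x =>
    -Real.sin ((1 - β) * x / 2) * ((1 - β) * 1 / 2) * Real.sin (x/2) ^ (β - 1)
      + Real.cos ((1 - β) * x / 2) *
        ((β - 1) * Real.sin (x/2) ^ (β - 1 - 1) * (Real.cos (x/2) * (1/2))) with hg'
  have hderiv : ∀ x ∈ Set.Icc a b, HasDerivAt g (g' x) x := by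
    intro x hx
    have hne : Real.sin (x/2) ≠ 0 := (hsinpos x hx).ne'
    have d1 : HasDerivAt (fun x : ℝ => (1 - β) * x / 2) ((1 - β) * 1 / 2) x :=
      (((hasDerivAt_id x).const_mul (1 - β)).div_const 2)
    have dcos : HasDerivAt (fun x : ℝ => Real.cos ((1 - β) * x / 2))
        (-Real.sin ((1 - β) * x / 2) * ((1 - β) * 1 / 2)) x := d1.cos
    have d2 : HasDerivAt (fun x : ℝ => x / 2) (1/2) x := by
      simpa using (hasDerivAt_id x).div_const 2
    have dsin : HasDerivAt (fun x : ℝ => Real.sin (x/2)) (Real.cos (x/2) * (1/2)) x := d2.sin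
    have drpow : HasDerivAt (fun x : ℝ => Real.sin (x/2) ^ (β - 1))
        ((β - 1) * Real.sin (x/2) ^ (β - 1 - 1) * (Real.cos (x/2) * (1/2))) x := by
      have := (Real.hasDerivAt_rpow_const (x := Real.sin (x/2)) (p := β - 1)
        (Or.inl hne)).comp x dsin
      exact this
    exact dcos.mul drpow
  -- bound the derivative
  set C : ℝ := s ^ (β - 2) with hC
  have hC0 : 0 < C := Real.rpow_pos_of_pos hs0 _
  have hbound : ∀ x ∈ Set.Icc a b, ‖g' x‖ ≤ C := by
    intro x hx
    have hm := hsin x hx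
    have hmpos := hsinpos x hx
    have e1 : Real.sin (x/2) ^ (β - 1) ≤ C := by
      calc Real.sin (x/2) ^ (β - 1) ≤ s ^ (β - 1) :=
            Real.rpow_le_rpow_of_nonpos hs0 hm (by linarith)
        _ ≤ s ^ (β - 2) :=
            Real.rpow_le_rpow_of_exponent_ge hs0 (by linarith) (by linarith)
    have e2 : Real.sin (x/2) ^ (β - 1 - 1) ≤ C := by
      have h : β - 1 - 1 = β - 2 := by ring
      rw [h, hC]
      exact Real.rpow_le_rpow_of_nonpos hs0 hm (by linarith)
    have p1 : 0 < Real.sin (x/2) ^ (β - 1) := Real.rpow_pos_of_pos hmpos _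
    have p2 : 0 < Real.sin (x/2) ^ (β - 1 - 1) := Real.rpow_pos_of_pos hmpos _
    have habs1 : |(-Real.sin ((1 - β) * x / 2) * ((1 - β) * 1 / 2))| ≤ (1 - β) / 2 := by
      rw [abs_mul, abs_neg]
      have h1 : |Real.sin ((1 - β) * x / 2)| ≤ 1 := Real.abs_sin_le_one _
      have h2 : |(1 - β) * 1 / 2| = (1 - β) / 2 := by
        rw [abs_of_nonneg (by linarith)]; ring
      rw [h2]
      nlinarith [abs_nonneg (Real.sin ((1 - β) * x / 2))]
    have habs2 : |Real.cos ((1 - β) * x / 2)| ≤ 1 := Real.abs_cos_le_one _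
    have habs3 : |Real.cos (x/2)| ≤ 1 := Real.abs_cos_le_one _
    have term1 : |(-Real.sin ((1 - β) * x / 2) * ((1 - β) * 1 / 2)) *
        Real.sin (x/2) ^ (β - 1)| ≤ (1 - β) / 2 * C := by
      rw [abs_mul, abs_of_pos p1]
      have := mul_le_mul habs1 e1 p1.le (by linarith)
      linarith
    have term2 : |Real.cos ((1 - β) * x / 2) *
        ((β - 1) * Real.sin (x/2) ^ (β - 1 - 1) * (Real.cos (x/2) * (1/2)))| ≤
        (1 - β) / 2 * C := by
      rw [abs_mul]
      have h : |(β - 1) * Real.sin (x/2) ^ (β - 1 - 1) * (Real.cos (x/2) * (1/2))| ≤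
          (1 - β) / 2 * C := by
        rw [abs_mul, abs_mul, abs_mul]
        rw [abs_of_pos p2]
        have hb1 : |β - 1| = 1 - β := by rw [abs_of_neg (by linarith)]; ring
        have hh : |(1:ℝ)/2| = 1/2 := by norm_num
        rw [hb1, hh]
        calc (1 - β) * Real.sin (x/2) ^ (β - 1 - 1) * (|Real.cos (x/2)| * (1/2))
            ≤ (1 - β) * C * (1 * (1/2)) := by
              apply mul_le_mul
              · exact mul_le_mul_of_nonneg_left e2 (by linarith)
              · exact mul_le_mul_of_nonneg_right habs3 (by norm_num)
              · exact mul_nonneg (abs_nonneg _) (by norm_num)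
              · exact mul_nonneg (by linarith) hC0.le
          _ = (1 - β) / 2 * C := by ring
      calc |Real.cos ((1 - β) * x / 2)| *
            |(β - 1) * Real.sin (x/2) ^ (β - 1 - 1) * (Real.cos (x/2) * (1/2))|
          ≤ 1 * ((1 - β) / 2 * C) := by
            apply mul_le_mul habs2 h (abs_nonneg _) (by norm_num)
        _ = (1 - β) / 2 * C := by ring
    have : |g' x| ≤ (1 - β) / 2 * C + (1 - β) / 2 * C := by
      rw [hg']
      exact le_trans (abs_add_le _ _) (add_le_add term1 term2)
    rw [Real.norm_eq_abs]
    nlinarith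
  -- mean value theorem
  have hmem_a : a ∈ Set.Icc a b := Set.left_mem_Icc.mpr hab
  have hmem_b : b ∈ Set.Icc a b := Set.right_mem_Icc.mpr hab
  have key : ‖g b - g a‖ ≤ C * ‖b - a‖ :=
    (convex_Icc a b).norm_image_sub_le_of_norm_hasDerivWithin_le
      (fun x hx => (hderiv x hx).hasDerivWithinAt) hbound hmem_a hmem_b
  have hnorm : ‖b - a‖ = Real.pi / n := by
    rw [Real.norm_eq_abs, hba, abs_of_pos (by positivity)]
  -- rewrite wCoef as g
  have hw : ∀ x ∈ Set.Icc a b, wCoef β x = g x := by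
    intro x hx
    have hmpos := hsinpos x hx
    have hrw : (Real.sin (x/2) ^ (1 - β))⁻¹ = Real.sin (x/2) ^ (β - 1) := by
      rw [← Real.rpow_neg hmpos.le, show -(1 - β) = β - 1 by ring]
    rw [wCoef, hg, div_eq_mul_inv (Real.cos ((1 - β) * x / 2))
      (Real.sin (x/2) ^ (1 - β)), hrw]
  have habs : |wCoef β a - wCoef β b| ≤ C * (Real.pi / n) := by
    rw [hw a hmem_a, hw b hmem_b, abs_sub_comm]
    calc |g b - g a| = ‖g b - g a‖ := (Real.norm_eq_abs _).symm
      _ ≤ C * ‖b - a‖ := key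
      _ = C * (Real.pi / n) := by rw [hnorm]
  -- final arithmetic
  have hfinal : C * (Real.pi / n) = Real.pi * (n:ℝ) ^ (1 - β) / (i:ℝ) ^ (2 - β) := by
    rw [hC, hs, Real.div_rpow hi0.le hn0.le]
    rw [show β - 2 = -(2 - β) by ring, Real.rpow_neg hi0.le, Real.rpow_neg hn0.le]
    have h1 : (n:ℝ) ^ (2 - β) = (n:ℝ) ^ (1 - β) * n := by
      rw [show (2 - β) = (1 - β) + 1 by ring, Real.rpow_add hn0, Real.rpow_one]
    have h2 : ((i:ℝ) ^ (2 - β)) ≠ 0 := (Real.rpow_pos_of_pos hi0 _).ne'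
    have h3 : ((n:ℝ) ^ (2 - β)) ≠ 0 := (Real.rpow_pos_of_pos hn0 _).ne'
    have h4 : ((n:ℝ) ^ (1 - β)) ≠ 0 := (Real.rpow_pos_of_pos hn0 _).ne'
    rw [h1]
    field_simp
  calc |wCoef β a - wCoef β b| ≤ C * (Real.pi / n) := habs
    _ = Real.pi * (n:ℝ) ^ (1 - β) / (i:ℝ) ^ (2 - β) := hfinal

end
end

section
/- Let 0 < α, β < 1 with α + β < 1, and let Λ = {λ_k} be an increasing sequence of positive numbers with λ₁ > 1 and λ_k → ∞ such that λ_k / k^{1−(α+β)} decreases to 0. Write λ_j = j^{1−(α+β)} γ_j (so that γ_j is nonincreasing) and t_j := (Σ_{i=1}^{j} 1/λ_i)^{−1}. If Σ_{k=1}^∞ λ_k / k^{2−(α+β)} = ∞, then for every integer j₀ ≥ 1, Σ_{j=j₀}^{[(N−1)/2]} t_j / j^{1−(α+β)} → ∞ as N → ∞; in particular Σ_{j=j₀}^{∞} γ_j / j = ∞. -/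
open Filter Finset

noncomputable section

/-- `t_j = (Σ_{i=1}^j 1/λ_i)⁻¹`. -/
def tcoef (lam : ℕ → ℝ) (j : ℕ) : ℝ := (∑ i ∈ Finset.Icc 1 j, 1 / lam i)⁻¹

/-- Key elementary estimate: for `0 < p < 1`, `∑_{i=1}^j i^{-(1-p)} ≤ j^p / p`. -/
lemma sum_inv_rpow_le (p : ℝ) (hp0 : 0 < p) (hp1 : p < 1) :
    ∀ j : ℕ, 1 ≤ j → ∑ i ∈ Finset.Icc 1 j, ((i : ℝ) ^ (1 - p))⁻¹ ≤ (j : ℝ) ^ p / p := by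
  intro j hj
  induction j, hj using Nat.le_induction with
  | base =>
    simp only [Finset.Icc_self, Finset.sum_singleton, Nat.cast_one, Real.one_rpow, inv_one]
    rw [le_div_iff₀ hp0, one_mul]
    exact hp1.le
  | succ j hj ih =>
    rw [Finset.sum_Icc_succ_top (by omega : 1 ≤ j + 1)]
    have hx : (0 : ℝ) < (j : ℝ) + 1 := by positivity
    -- Bernoulli: (1 - 1/x)^p ≤ 1 - p/x with x = j+1
    have hB : (1 + (-(1 / ((j : ℝ) + 1)))) ^ p ≤ 1 + p * (-(1 / ((j : ℝ) + 1))) := by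
      apply rpow_one_add_le_one_add_mul_self _ hp0.le hp1.le
      rw [neg_le, neg_neg]
      rw [div_le_one hx]
      linarith
    have hj1 : (1 : ℝ) ≤ (j : ℝ) := by exact_mod_cast hj
    have hxm : (1 + (-(1 / ((j : ℝ) + 1)))) = (j : ℝ) / ((j : ℝ) + 1) := by
      field_simp
      ring
    rw [hxm] at hB
    -- multiply by x^p
    have hxp : (0 : ℝ) < ((j : ℝ) + 1) ^ p := Real.rpow_pos_of_pos hx p
    have hmul : ((j : ℝ) / ((j : ℝ) + 1)) ^ p * (((j : ℝ) + 1) ^ p)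
        = (j : ℝ) ^ p := by
      rw [← Real.mul_rpow (by positivity) hx.le]
      rw [div_mul_cancel₀]
      exact hx.ne'
    have hstep : (j : ℝ) ^ p ≤ ((j : ℝ) + 1) ^ p - p * (((j : ℝ) + 1) ^ p / ((j : ℝ) + 1)) := by
      have := mul_le_mul_of_nonneg_right hB hxp.le
      rw [hmul] at this
      calc (j : ℝ) ^ p ≤ (1 + p * (-(1 / ((j : ℝ) + 1)))) * (((j : ℝ) + 1) ^ p) := this
        _ = ((j : ℝ) + 1) ^ p - p * (((j : ℝ) + 1) ^ p / ((j : ℝ) + 1)) := by ring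
    -- (x^p / x) = x^(p-1) = (x^(1-p))⁻¹
    have hpow : ((j : ℝ) + 1) ^ p / ((j : ℝ) + 1) = ((((j : ℝ) + 1)) ^ (1 - p))⁻¹ := by
      rw [eq_comm, ← Real.rpow_neg hx.le, show -(1 - p) = p - 1 by ring,
        Real.rpow_sub hx, Real.rpow_one]
    rw [hpow] at hstep
    have hterm : ((((j : ℝ) + 1)) ^ (1 - p))⁻¹ ≤ (((j : ℝ) + 1) ^ p - (j : ℝ) ^ p) / p := by
      rw [le_div_iff₀ hp0]
      nlinarith
    have hcast : ((j + 1 : ℕ) : ℝ) = (j : ℝ) + 1 := by push_cast; ring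
    rw [hcast]
    calc ∑ i ∈ Finset.Icc 1 j, ((i : ℝ) ^ (1 - p))⁻¹ + ((((j : ℝ) + 1)) ^ (1 - p))⁻¹
        ≤ (j : ℝ) ^ p / p + (((j : ℝ) + 1) ^ p - (j : ℝ) ^ p) / p := add_le_add ih hterm
      _ = ((j : ℝ) + 1) ^ p / p := by ring

/-- **Estimate (39) of Goginava–Sahakian.**
If `Λ = {λ_k}` is increasing, `λ₁ > 1`, `λ_k → ∞`, `λ_k / k^{1-(α+β)} ↓ 0` and
`Σ λ_k / k^{2-(α+β)} = ∞`, then for every `j₀ ≥ 1` the partial sums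
`Σ_{j=j₀}^{[(N-1)/2]} t_j / j^{1-(α+β)}` tend to `∞` as `N → ∞`; in particular, with
`γ_j = λ_j / j^{1-(α+β)}`, the series `Σ_{j≥j₀} γ_j / j` diverges. -/
theorem tcoef_partial_sums_unbounded
    (α β : ℝ) (hα0 : 0 < α) (hα1 : α < 1) (hβ0 : 0 < β) (hβ1 : β < 1)
    (hαβ : α + β < 1)
    (lam : ℕ → ℝ)
    (hlam_pos : ∀ k, 1 ≤ k → 0 < lam k)
    (hlam1 : 1 < lam 1)
    (hlam_mono : ∀ k, 1 ≤ k → lam k ≤ lam (k + 1))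
    (hlam_top : Tendsto lam atTop atTop)
    (hdec : ∀ k, 1 ≤ k →
      lam (k + 1) / ((k : ℝ) + 1) ^ (1 - (α + β)) ≤ lam k / (k : ℝ) ^ (1 - (α + β)))
    (hzero : Tendsto (fun k : ℕ => lam k / (k : ℝ) ^ (1 - (α + β))) atTop (nhds 0))
    (hdiv : ¬ Summable (fun k : ℕ => lam (k + 1) / ((k : ℝ) + 1) ^ (2 - (α + β)))) :
    (∀ j₀ : ℕ, 1 ≤ j₀ →
      Tendsto (fun N : ℕ =>
        ∑ j ∈ Finset.Icc j₀ ((N - 1) / 2), tcoef lam j / (j : ℝ) ^ (1 - (α + β)))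
        atTop atTop) ∧
    (∀ j₀ : ℕ, 1 ≤ j₀ →
      ¬ Summable (fun j : ℕ =>
        (lam (j + j₀) / ((j : ℝ) + (j₀ : ℝ)) ^ (1 - (α + β))) / ((j : ℝ) + (j₀ : ℝ)))) := by
  set p : ℝ := α + β with hpdef
  have hp0 : 0 < p := by positivity
  have hp1 : p < 1 := hαβ
  set F : ℕ → ℝ := fun n => lam n / (n : ℝ) ^ (2 - p) with hFdef
  have hF0 : ∀ n, 0 ≤ F n := by
    intro n
    rcases Nat.eq_zero_or_pos n with rfl | hn
    · simp [hFdef, Real.zero_rpow (by linarith : (2 : ℝ) - p ≠ 0)]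
    · exact le_of_lt (div_pos (hlam_pos n hn) (Real.rpow_pos_of_pos (by exact_mod_cast hn) _))
  -- F is not summable
  have hNS : ¬ Summable F := by
    intro h
    apply hdiv
    have h1 : Summable (fun n => F (n + 1)) := (summable_nat_add_iff 1).2 h
    convert h1 using 2 with k
    simp only [hFdef]
    push_cast
    ring_nf
  -- equality of the part-2 summand with F (j + j₀)
  have hpart2 : ∀ j₀ : ℕ, 1 ≤ j₀ →
      ¬ Summable (fun j : ℕ =>
        (lam (j + j₀) / ((j : ℝ) + (j₀ : ℝ)) ^ (1 - p)) / ((j : ℝ) + (j₀ : ℝ))) := by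
    intro j₀ hj₀ h
    apply hNS
    apply (summable_nat_add_iff j₀).1
    show Summable (fun n => F (n + j₀))
    convert h using 2 with j
    have hx : (0 : ℝ) < (j : ℝ) + (j₀ : ℝ) := by
      have : (1 : ℝ) ≤ (j₀ : ℝ) := by exact_mod_cast hj₀
      linarith [Nat.cast_nonneg (α := ℝ) j]
    simp only [hFdef]
    have hcast : ((j + j₀ : ℕ) : ℝ) = (j : ℝ) + (j₀ : ℝ) := by push_cast; ring
    rw [hcast, div_div]
    congr 1
    rw [show (2 : ℝ) - p = (1 - p) + 1 by ring, Real.rpow_add hx, Real.rpow_one]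
  refine ⟨?_, hpart2⟩
  -- Part 1
  -- γ is antitone on [1, ∞)
  have hγanti : ∀ i j : ℕ, 1 ≤ i → i ≤ j →
      lam j / (j : ℝ) ^ (1 - p) ≤ lam i / (i : ℝ) ^ (1 - p) := by
    intro i j hi hij
    induction j, hij using Nat.le_induction with
    | base => exact le_refl _
    | succ j hij ih =>
      have hj1 : 1 ≤ j := le_trans hi hij
      have := hdec j hj1
      have hcast : ((j + 1 : ℕ) : ℝ) = (j : ℝ) + 1 := by push_cast; ring
      rw [hcast]
      exact le_trans this ih
  have hγpos : ∀ j : ℕ, 1 ≤ j → 0 < lam j / (j : ℝ) ^ (1 - p) := by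
    intro j hj
    exact div_pos (hlam_pos j hj) (Real.rpow_pos_of_pos (by exact_mod_cast hj) _)
  -- key termwise bound : p * F j ≤ tcoef lam j / j^(1-p)
  have hterm : ∀ j : ℕ, 1 ≤ j → p * F j ≤ tcoef lam j / (j : ℝ) ^ (1 - p) := by
    intro j hj
    have hjR : (0 : ℝ) < (j : ℝ) := by exact_mod_cast hj
    set γ : ℝ := lam j / (j : ℝ) ^ (1 - p) with hγ
    have hγp : 0 < γ := hγpos j hj
    -- sum bound
    have hS : ∑ i ∈ Finset.Icc 1 j, 1 / lam i ≤ (j : ℝ) ^ p / (p * γ) := by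
      have h1 : ∑ i ∈ Finset.Icc 1 j, 1 / lam i
          ≤ ∑ i ∈ Finset.Icc 1 j, ((i : ℝ) ^ (1 - p))⁻¹ / γ := by
        apply Finset.sum_le_sum
        intro i hi
        obtain ⟨hi1, hij⟩ := Finset.mem_Icc.1 hi
        have hiR : (0 : ℝ) < (i : ℝ) := by exact_mod_cast hi1
        have hipow : (0 : ℝ) < (i : ℝ) ^ (1 - p) := Real.rpow_pos_of_pos hiR _
        have hglei : γ ≤ lam i / (i : ℝ) ^ (1 - p) := hγanti i j hi1 hij
        have hge : γ * (i : ℝ) ^ (1 - p) ≤ lam i := by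
          rw [← le_div_iff₀ hipow]; exact hglei
        have hγi : 0 < γ * (i : ℝ) ^ (1 - p) := mul_pos hγp hipow
        calc 1 / lam i ≤ 1 / (γ * (i : ℝ) ^ (1 - p)) :=
              one_div_le_one_div_of_le hγi hge
          _ = ((i : ℝ) ^ (1 - p))⁻¹ / γ := by
              rw [one_div, mul_inv]; ring
      have h2 : ∑ i ∈ Finset.Icc 1 j, ((i : ℝ) ^ (1 - p))⁻¹ / γ
          = (∑ i ∈ Finset.Icc 1 j, ((i : ℝ) ^ (1 - p))⁻¹) / γ := by
        rw [Finset.sum_div]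
      have h3 := sum_inv_rpow_le p hp0 hp1 j hj
      calc ∑ i ∈ Finset.Icc 1 j, 1 / lam i
          ≤ (∑ i ∈ Finset.Icc 1 j, ((i : ℝ) ^ (1 - p))⁻¹) / γ := by rw [← h2]; exact h1
        _ ≤ ((j : ℝ) ^ p / p) / γ := by
            apply div_le_div_of_nonneg_right h3 hγp.le |>.trans_eq rfl
        _ = (j : ℝ) ^ p / (p * γ) := by rw [div_div]
    have hSpos : 0 < ∑ i ∈ Finset.Icc 1 j, 1 / lam i := by
      apply Finset.sum_pos
      · intro i hi
        obtain ⟨hi1, _⟩ := Finset.mem_Icc.1 hi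
        exact div_pos one_pos (hlam_pos i hi1)
      · exact ⟨1, Finset.mem_Icc.2 ⟨le_refl 1, hj⟩⟩
    have hinv : p * γ / (j : ℝ) ^ p ≤ tcoef lam j := by
      rw [tcoef]
      have := one_div_le_one_div_of_le hSpos hS
      rw [one_div, one_div, inv_div] at this
      exact this
    have hjpow : 0 < (j : ℝ) ^ (1 - p) := Real.rpow_pos_of_pos hjR _
    have : (p * γ / (j : ℝ) ^ p) / (j : ℝ) ^ (1 - p) ≤ tcoef lam j / (j : ℝ) ^ (1 - p) :=
      div_le_div_of_nonneg_right hinv hjpow.le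
    refine le_trans (le_of_eq ?_) this
    -- p * F j = (p * γ / j^p) / j^(1-p)
    have hprod : (j : ℝ) ^ p * (j : ℝ) ^ (1 - p) = (j : ℝ) := by
      rw [← Real.rpow_add hjR]; norm_num
    have hprod2 : (j : ℝ) ^ (1 - p) * (j : ℝ) = (j : ℝ) ^ (2 - p) := by
      rw [show (2 : ℝ) - p = (1 - p) + 1 by ring, Real.rpow_add hjR, Real.rpow_one]
    simp only [hFdef]
    rw [hγ, div_div, hprod, ← hprod2, ← div_div]
    ring
  -- divergence of partial sums of F
  have hT : Tendsto (fun n : ℕ => ∑ i ∈ Finset.range n, F i) atTop atTop :=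
    (not_summable_iff_tendsto_nat_atTop_of_nonneg hF0).1 hNS
  intro j₀ hj₀
  -- partial sums over Icc j₀ M of p * F tend to atTop
  have hG : Tendsto (fun M : ℕ => ∑ j ∈ Finset.Icc j₀ M, p * F j) atTop atTop := by
    have heq : ∀ M : ℕ, j₀ ≤ M →
        ∑ j ∈ Finset.Icc j₀ M, p * F j
          = p * ((∑ i ∈ Finset.range (M + 1), F i) - ∑ i ∈ Finset.range j₀, F i) := by
      intro M hM
      have h1 : Finset.Icc j₀ M = Finset.Ico j₀ (M + 1) := by
        rw [Finset.Ico_add_one_right_eq_Icc]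
      have h2 : (∑ i ∈ Finset.Ico 0 j₀, F i) + ∑ i ∈ Finset.Ico j₀ (M + 1), F i
          = ∑ i ∈ Finset.Ico 0 (M + 1), F i :=
        Finset.sum_Ico_consecutive _ (Nat.zero_le _) (by omega)
      rw [h1, ← Finset.mul_sum]
      congr 1
      rw [Finset.range_eq_Ico, Finset.range_eq_Ico, ← h2]
      ring
    have hT' : Tendsto (fun M : ℕ =>
        p * ((∑ i ∈ Finset.range (M + 1), F i) - ∑ i ∈ Finset.range j₀, F i))
        atTop atTop := by
      apply Tendsto.const_mul_atTop hp0
      apply Filter.tendsto_atTop_add_const_right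
      exact hT.comp (tendsto_add_atTop_nat 1)
    apply hT'.congr'
    filter_upwards [eventually_ge_atTop j₀] with M hM
    exact (heq M hM).symm
  have hH : Tendsto (fun M : ℕ =>
      ∑ j ∈ Finset.Icc j₀ M, tcoef lam j / (j : ℝ) ^ (1 - p)) atTop atTop := by
    apply tendsto_atTop_mono _ hG
    intro M
    apply Finset.sum_le_sum
    intro j hjmem
    obtain ⟨hj1, _⟩ := Finset.mem_Icc.1 hjmem
    exact hterm j (le_trans hj₀ hj1)
  have hMN : Tendsto (fun N : ℕ => (N - 1) / 2) atTop atTop := by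
    apply Filter.tendsto_atTop_atTop.2
    intro b
    exact ⟨2 * b + 1, fun a ha => by omega⟩
  exact hH.comp hMN

end
end
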